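/- Let Y_1, …, Y_k be ≤*-unbounded subsets of the increasing functions ℕ → ℕ and g ∈ ℕ^ℕ. Then there exist f_i ∈ Y_i (i = 1, …, k) such that the set {n : g(n) < min(f_1(n), …, f_k(n))} is infinite. -/

import Mathlib

open Set Filter Cardinal

/-- A semifilter: a nonempty family of infinite subsets of ℕ closed under
almost-supersets. -/
def SemifilterOn (F : Set (Set ℕ)) : Prop :=
  F.Nonempty ∧ (∀ A ∈ F, A.Infinite) ∧
    ∀ A ∈ F, ∀ B : Set ℕ, (A \ B).Finite → B ∈ F

/-- `f ≤_F g` : the set where `f ≤ g` belongs to `F`. -/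
def LeSF (F : Set (Set ℕ)) (f g : ℕ → ℕ) : Prop := {n | f n ≤ g n} ∈ F

/-- `Y` is bounded with respect to `≤_F`. -/
def BoundedSF (F : Set (Set ℕ)) (Y : Set (ℕ → ℕ)) : Prop :=
  ∃ g : ℕ → ℕ, ∀ f ∈ Y, LeSF F f g

/-- `b(F)` : the minimal cardinality of a `≤_F`-unbounded family in `ℕ^ℕ`. -/
noncomputable def bSF (F : Set (Set ℕ)) : Cardinal :=
  sInf {c : Cardinal | ∃ Y : Set (ℕ → ℕ), #Y = c ∧ ¬ BoundedSF F Y}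

/-- `f ≤* g` : eventual domination. -/
def EvLe (f g : ℕ → ℕ) : Prop := ∀ᶠ n in Filter.atTop, f n ≤ g n

lemma key_lemma (Y : Set (ℕ → ℕ)) (hmono : ∀ f ∈ Y, StrictMono f)
    (hunb : ¬ ∃ g : ℕ → ℕ, ∀ f ∈ Y, EvLe f g)
    (g : ℕ → ℕ) (A : Set ℕ) (hA : A.Infinite) :
    ∃ f ∈ Y, {n ∈ A | g n < f n}.Infinite := by
  by_contra h
  push_neg at h
  apply hunb
  have ha : ∀ n : ℕ, ∃ a, a ∈ A ∧ n ≤ a := by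
    intro n
    obtain ⟨a, haA, han⟩ := hA.exists_gt n
    exact ⟨a, haA, han.le⟩
  choose a haA hna using ha
  refine ⟨fun n => g (a n), fun f hf => ?_⟩
  have hfin : {n ∈ A | g n < f n}.Finite := (h f hf)
  obtain ⟨N, hN⟩ := hfin.bddAbove
  rw [EvLe, eventually_atTop]
  refine ⟨N + 1, fun n hn => ?_⟩
  have h1 : f n ≤ f (a n) := (hmono f hf).monotone (hna n)
  have h2 : f (a n) ≤ g (a n) := by
    by_contra hlt
    push_neg at hlt
    have h3 : a n ≤ N := hN ⟨haA n, hlt⟩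
    have h4 : N + 1 ≤ a n := le_trans hn (hna n)
    omega
  exact le_trans h1 h2

lemma step_lemma : ∀ (k : ℕ) (Y : Fin k → Set (ℕ → ℕ)),
    (∀ i, ∀ f ∈ Y i, StrictMono f) →
    (∀ i, ¬ ∃ g : ℕ → ℕ, ∀ f ∈ Y i, EvLe f g) →
    ∀ (g : ℕ → ℕ) (A : Set ℕ), A.Infinite →
    ∃ f : Fin k → (ℕ → ℕ), (∀ i, f i ∈ Y i) ∧
      {n ∈ A | ∀ i, g n < f i n}.Infinite := by
  intro k
  induction k with
  | zero =>
    intro Y _ _ g A hA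
    exact ⟨fun i => i.elim0, fun i => i.elim0, by simpa using hA⟩
  | succ k ih =>
    intro Y hmono hunb g A hA
    obtain ⟨f0, hf0Y, hB⟩ := key_lemma (Y 0) (hmono 0) (hunb 0) g A hA
    obtain ⟨f', hf'Y, hinf⟩ := ih (fun i => Y i.succ) (fun i => hmono i.succ)
      (fun i => hunb i.succ) g _ hB
    refine ⟨Fin.cons f0 f', fun i => ?_, ?_⟩
    · refine Fin.cases ?_ ?_ i
      · exact hf0Y
      · exact fun j => hf'Y j
    · refine hinf.mono ?_
      rintro n ⟨⟨hnA, hgf0⟩, hall⟩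
      refine ⟨hnA, fun i => ?_⟩
      refine Fin.cases ?_ ?_ i
      · exact hgf0
      · exact fun j => hall j

/-- given `≤*`-unbounded sets `Y₁, …, Y_k` of increasing
functions and any `g`, one can pick `fᵢ ∈ Yᵢ` so that
`{n : g(n) < min(f₁(n), …, f_k(n))}` is infinite. -/
theorem stmt_16 (k : ℕ) (Y : Fin k → Set (ℕ → ℕ))
    (hmono : ∀ i, ∀ f ∈ Y i, StrictMono f)
    (hunb : ∀ i, ¬ ∃ g : ℕ → ℕ, ∀ f ∈ Y i, EvLe f g)
    (g : ℕ → ℕ) :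
    ∃ f : Fin k → (ℕ → ℕ), (∀ i, f i ∈ Y i) ∧
      {n | ∀ i, g n < f i n}.Infinite := by
  obtain ⟨f, hfY, hinf⟩ := step_lemma k Y hmono hunb g Set.univ Set.infinite_univ
  exact ⟨f, hfY, by simpa using hinf⟩
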